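/- There exists a finite coloring of the group ℤ × ℤ (specifically, a 3-coloring) such that ℤ² contains no infinite monochromatic symmetric subset; moreover 2 colors do not suffice. That is, ν(ℤ²) = 3. -/

import Mathlib

private def chi3 : ℤ × ℤ → Fin 3 := fun p =>
  if 0 < p.2 then (if 0 < p.1 + p.2 then 0 else 1)
  else if p.2 = 0 then (if 0 < p.1 then 0 else if p.1 < 0 then 1 else 0)
  else (if 0 ≤ p.1 then 2 else 1)

private lemma chi3_bound (s a : ℤ × ℤ) (c : Fin 3) (h1 : chi3 a = c) (h2 : chi3 (s - a) = c) :
    -((s.1.natAbs : ℤ) + s.2.natAbs) ≤ a.1 ∧ a.1 ≤ (s.1.natAbs : ℤ) + s.2.natAbs ∧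
    -((s.1.natAbs : ℤ) + s.2.natAbs) ≤ a.2 ∧ a.2 ≤ (s.1.natAbs : ℤ) + s.2.natAbs := by
  obtain ⟨a1, a2⟩ := a
  obtain ⟨s1, s2⟩ := s
  simp only [chi3, Prod.mk_sub_mk] at h1 h2
  dsimp only at h1 h2 ⊢
  split_ifs at h1 h2 <;>
    first
      | (exact absurd (h1.trans h2.symm) (by decide))
      | omega

private lemma part1 : ∃ χ : ℤ × ℤ → Fin 3,
    ¬ ∃ A : Set (ℤ × ℤ), A.Infinite ∧ (∃ c, ∀ a ∈ A, χ a = c) ∧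
      (∃ x : ℤ × ℤ, A = (fun a => 2 • x - a) '' A) := by
  refine ⟨chi3, ?_⟩
  rintro ⟨A, hAinf, ⟨c, hc⟩, x, hsym⟩
  set s : ℤ × ℤ := 2 • x with hs
  set M : ℤ := (s.1.natAbs : ℤ) + s.2.natAbs with hM
  have key : A ⊆ Set.Icc ((-M, -M) : ℤ × ℤ) (M, M) := by
    intro a ha
    have h1 : chi3 a = c := hc a ha
    have hmem : s - a ∈ A := by
      rw [hsym]
      exact ⟨a, ha, rfl⟩
    have h2 : chi3 (s - a) = c := hc _ hmem
    have := chi3_bound s a c h1 h2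
    simp only [Set.mem_Icc, Prod.mk_le_mk, Prod.le_def]
    constructor <;> constructor <;> omega
  exact hAinf ((Set.finite_Icc _ _).subset key)

private lemma part2 (χ : ℤ × ℤ → Fin 2) :
    ∃ A : Set (ℤ × ℤ), A.Infinite ∧ (∃ c, ∀ a ∈ A, χ a = c) ∧
      (∃ x : ℤ × ℤ, A = (fun a => 2 • x - a) '' A) := by
  by_cases h : ∃ x : ℤ × ℤ, ∃ c : Fin 2,
      {d : ℤ × ℤ | χ (x + d) = c ∧ χ (x - d) = c}.Infinite
  · obtain ⟨x, c, hD⟩ := h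
    set S : Set (ℤ × ℤ) := {d | χ (x + d) = c ∧ χ (x - d) = c} with hS
    have hneg : ∀ d, d ∈ S → -d ∈ S := by
      intro d hd
      refine ⟨?_, ?_⟩
      · rw [show x + -d = x - d by abel]; exact hd.2
      · rw [show x - -d = x + d by abel]; exact hd.1
    refine ⟨(fun d => x + d) '' S, hD.image ((add_right_injective x).injOn), ⟨c, ?_⟩, x, ?_⟩
    · rintro a ⟨d, hd, rfl⟩; exact hd.1
    · ext a
      simp only [Set.mem_image]
      constructor
      · rintro ⟨d, hd, rfl⟩
        exact ⟨x + -d, ⟨-d, hneg d hd, rfl⟩, by rw [two_smul]; abel⟩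
      · rintro ⟨b, ⟨d, hd, rfl⟩, rfl⟩
        exact ⟨-d, hneg d hd, by rw [two_smul]; abel⟩
  · have hfin : ∀ (x : ℤ × ℤ) (c : Fin 2), {d | χ (x + d) = c ∧ χ (x - d) = c}.Finite := by
      intro x c
      by_contra hinf
      exact h ⟨x, c, hinf⟩
    have hx : ∀ x : ℤ × ℤ, {d | χ (x + d) = χ (x - d)}.Finite := by
      intro x
      refine ((hfin x 0).union (hfin x 1)).subset ?_
      intro d hd
      simp only [Set.mem_setOf_eq] at hd
      rcases (show χ (x + d) = 0 ∨ χ (x + d) = 1 by omega) with h0 | h1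
      · exact Or.inl ⟨h0, hd ▸ h0⟩
      · exact Or.inr ⟨h1, hd ▸ h1⟩
    have hC : ∀ t : ℤ × ℤ, {b | χ b ≠ χ (b + t + t)}.Finite := by
      intro t
      refine (((hx 0)).union ((hx t).preimage ((add_left_injective t).injOn))).subset ?_
      intro b hb
      simp only [Set.mem_setOf_eq] at hb
      by_cases hbb : χ (0 + b) = χ (0 - b)
      · exact Or.inl hbb
      · right
        simp only [Set.mem_preimage, Set.mem_setOf_eq]
        have e1 : t + (b + t) = b + t + t := by abel
        have e2 : t - (b + t) = 0 - b := by abel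
        rw [e1, e2]
        have hzb : (0 : ℤ × ℤ) + b = b := by abel
        rw [hzb] at hbb
        omega
    set dbl : ℤ × ℤ → ℤ × ℤ := fun y => y + y with hdbl
    have hdblinj : Function.Injective dbl := by
      intro a b hab
      have h1 := congrArg Prod.fst hab
      have h2 := congrArg Prod.snd hab
      simp only [hdbl, Prod.fst_add, Prod.snd_add] at h1 h2
      exact Prod.ext (by omega) (by omega)
    set k : ℤ × ℤ → Fin 2 := fun y => χ (dbl y) with hk
    have hG : ∀ t : ℤ × ℤ, {y | k y ≠ k (y + t)}.Finite := by
      intro t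
      refine ((hC (t)).preimage hdblinj.injOn).subset ?_
      intro y hy
      simp only [Set.mem_setOf_eq, hk] at hy
      simp only [Set.mem_preimage, Set.mem_setOf_eq]
      have : dbl (y + t) = dbl y + t + t := by simp only [hdbl]; abel
      rwa [this] at hy
    -- bound the two exceptional sets
    have hSfin := (hG (1, 0)).union (hG (0, 1))
    obtain ⟨ub, hub⟩ := hSfin.bddAbove
    obtain ⟨lb, hlb⟩ := hSfin.bddBelow
    set N : ℤ := |ub.1| + |ub.2| + |lb.1| + |lb.2| with hN
    have hNb : ∀ y : ℤ × ℤ, (k y ≠ k (y + (1, 0)) ∨ k y ≠ k (y + (0, 1))) →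
        -N ≤ y.1 ∧ y.1 ≤ N ∧ -N ≤ y.2 ∧ y.2 ≤ N := by
      intro y hy
      have hmem : y ∈ ({y | k y ≠ k (y + (1, 0))} ∪ {y | k y ≠ k (y + (0, 1))}) := hy
      have h1 := hub hmem
      have h2 := hlb hmem
      rw [Prod.le_def] at h1 h2
      obtain ⟨h11, h12⟩ := h1
      obtain ⟨h21, h22⟩ := h2
      have e1 : ub.1 ≤ |ub.1| := le_abs_self _
      have e2 : ub.2 ≤ |ub.2| := le_abs_self _
      have e3 : -|lb.1| ≤ lb.1 := neg_abs_le _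
      have e4 : -|lb.2| ≤ lb.2 := neg_abs_le _
      have p1 : 0 ≤ |ub.1| := abs_nonneg _
      have p2 : 0 ≤ |ub.2| := abs_nonneg _
      have p3 : 0 ≤ |lb.1| := abs_nonneg _
      have p4 : 0 ≤ |lb.2| := abs_nonneg _
      simp only [hN]
      omega
    have hstepR : ∀ a b : ℤ, N < |b| → k (a, b) = k (a + 1, b) := by
      intro a b hb
      by_contra hne
      have := hNb (a, b) (Or.inl (by simpa using hne))
      simp only at this
      rcases abs_cases b with ⟨h1, h2⟩ | ⟨h1, h2⟩ <;> omega
    have hstepC : ∀ a b : ℤ, N < |a| → k (a, b) = k (a, b + 1) := by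
      intro a b ha
      by_contra hne
      have := hNb (a, b) (Or.inr (by simpa using hne))
      simp only at this
      rcases abs_cases a with ⟨h1, h2⟩ | ⟨h1, h2⟩ <;> omega
    have hrow : ∀ b : ℤ, N < |b| → ∀ a : ℤ, k (a, b) = k (0, b) := by
      intro b hb a
      induction a using Int.induction_on with
      | zero => rfl
      | succ i ih => rw [← hstepR i b hb]; exact ih
      | pred i ih => rw [hstepR (-i - 1) b hb]; simpa using ih
    have hcol : ∀ a : ℤ, N < |a| → ∀ b : ℤ, k (a, b) = k (a, 0) := by
      intro a ha b
      induction b using Int.induction_on with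
      | zero => rfl
      | succ i ih => rw [← hstepC a i ha]; exact ih
      | pred i ih => rw [hstepC a (-i - 1) ha]; simpa using ih
    have hN0 : 0 ≤ N := by
      simp only [hN]
      have p1 : 0 ≤ |ub.1| := abs_nonneg _
      have p2 : 0 ≤ |ub.2| := abs_nonneg _
      have p3 : 0 ≤ |lb.1| := abs_nonneg _
      have p4 : 0 ≤ |lb.2| := abs_nonneg _
      omega
    set c : Fin 2 := k (0, N + 1) with hc
    have hconst : {y : ℤ × ℤ | k y ≠ c} ⊆ Set.Icc ((-N, -N) : ℤ × ℤ) (N, N) := by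
      intro y hy
      simp only [Set.mem_setOf_eq] at hy
      simp only [Set.mem_Icc, Prod.le_def]
      obtain ⟨a, b⟩ := y
      by_contra hbox
      simp only [not_and_or, not_le] at hbox
      have hout : N < |a| ∨ N < |b| := by
        rcases abs_cases a with ⟨h1, _⟩ | ⟨h1, _⟩ <;>
          rcases abs_cases b with ⟨h2, _⟩ | ⟨h2, _⟩ <;>
          rcases hbox with (h | h) | (h | h) <;> omega
      apply hy
      rcases hout with ha | hb
      · calc k (a, b) = k (a, 0) := hcol a ha b
          _ = k (a, N + 1) := (hcol a ha (N + 1)).symm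
          _ = k (0, N + 1) := hrow (N + 1) (by rw [abs_of_nonneg (by omega)]; omega) a
      · calc k (a, b) = k (0, b) := hrow b hb a
          _ = k (N + 1, b) := (hrow b hb (N + 1)).symm
          _ = k (N + 1, 0) := hcol (N + 1) (by rw [abs_of_nonneg (by omega)]; omega) b
          _ = k (N + 1, N + 1) := (hcol (N + 1) (by rw [abs_of_nonneg (by omega)]; omega) (N + 1)).symm
          _ = k (0, N + 1) := hrow (N + 1) (by rw [abs_of_nonneg (by omega)]; omega) (N + 1)
    have hbadfin : {y : ℤ × ℤ | k y ≠ c}.Finite := (Set.finite_Icc _ _).subset hconst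
    have hTfin : ({y : ℤ × ℤ | k y ≠ c} ∪ (fun y => -y) ⁻¹' {y : ℤ × ℤ | k y ≠ c}).Finite :=
      hbadfin.union (hbadfin.preimage (neg_injective.injOn))
    have hcompl := hTfin.infinite_compl
    have himg : (dbl '' ({y : ℤ × ℤ | k y ≠ c} ∪ (fun y => -y) ⁻¹' {y : ℤ × ℤ | k y ≠ c})ᶜ).Infinite :=
      hcompl.image hdblinj.injOn
    exfalso
    apply h
    refine ⟨0, c, himg.mono ?_⟩
    rintro _ ⟨y, hy, rfl⟩
    simp only [Set.mem_compl_iff, Set.mem_union, Set.mem_preimage, Set.mem_setOf_eq,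
      not_or, not_not] at hy
    refine ⟨?_, ?_⟩
    · rw [show (0 : ℤ × ℤ) + dbl y = dbl y by abel]
      exact hy.1
    · rw [show (0 : ℤ × ℤ) - dbl y = dbl (-y) by simp only [hdbl]; abel]
      exact hy.2


/-- ν(ℤ²) = 3 : some 3-coloring of ℤ² has no infinite monochromatic symmetric
subset, while every 2-coloring has one. -/
theorem stmt_7 :
    (∃ χ : ℤ × ℤ → Fin 3, ¬ ∃ A : Set (ℤ × ℤ), A.Infinite ∧ (∃ c, ∀ a ∈ A, χ a = c) ∧
        (∃ x : ℤ × ℤ, A = (fun a => 2 • x - a) '' A)) ∧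
    (∀ χ : ℤ × ℤ → Fin 2, ∃ A : Set (ℤ × ℤ), A.Infinite ∧ (∃ c, ∀ a ∈ A, χ a = c) ∧
        (∃ x : ℤ × ℤ, A = (fun a => 2 • x - a) '' A)) :=
  ⟨part1, part2⟩
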